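/- Let φ : ℝ → (-a, a) be a homeomorphism onto its image with φ(0) = 0, and let h : [0,T] → ℝ be continuous with sup-norm less than a/2. Then there exists a unique real number s in the closed interval [min h, max h] such that ∫₀ᵀ φ⁻¹(h(t) - s) dt = 0. -/

import Mathlib

open Set

lemma key (a T : ℝ) (ha : 0 < a) (hT : 0 < T) (ψ : ℝ → ℝ)
    (hψc : ContinuousOn ψ (Set.Ioo (-a) a)) (hψ0 : ψ 0 = 0)
    (hmono : StrictMonoOn ψ (Set.Ioo (-a) a))
    (h : ℝ → ℝ) (hh : ContinuousOn h (Set.Icc 0 T))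
    (hbound : ∀ t ∈ Set.Icc (0:ℝ) T, |h t| < a / 2) :
    ∃! s : ℝ, s ∈ Set.Icc (sInf (h '' Set.Icc 0 T)) (sSup (h '' Set.Icc 0 T)) ∧
      (∫ t in (0:ℝ)..T, ψ (h t - s)) = 0 := by
  have hK : IsCompact (Set.Icc (0:ℝ) T) := isCompact_Icc
  have hKne : (Set.Icc (0:ℝ) T).Nonempty := ⟨0, by constructor <;> simp [hT.le]⟩
  have himg : IsCompact (h '' Set.Icc 0 T) := hK.image_of_continuousOn hh
  have himgne : (h '' Set.Icc 0 T).Nonempty := hKne.image h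
  set m := sInf (h '' Set.Icc 0 T) with hm
  set M := sSup (h '' Set.Icc 0 T) with hM
  obtain ⟨tm, htm, htm'⟩ := himg.sInf_mem himgne
  obtain ⟨tM, htM, htM'⟩ := himg.sSup_mem himgne
  have hmlt : |m| < a / 2 := by rw [hm, ← htm']; exact hbound tm htm
  have hMlt : |M| < a / 2 := by rw [hM, ← htM']; exact hbound tM htM
  have hmM : m ≤ M := csInf_le_csSup himgne himg.bddBelow himg.bddAbove
  have hle : ∀ t ∈ Set.Icc (0:ℝ) T, m ≤ h t ∧ h t ≤ M := fun t ht =>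
    ⟨csInf_le himg.bddBelow ⟨t, ht, rfl⟩, le_csSup himg.bddAbove ⟨t, ht, rfl⟩⟩
  set b := M - m with hb
  have hb0 : 0 ≤ b := by linarith
  have hba : b < a := by
    have := abs_le.mp hmlt.le
    have := abs_le.mp hMlt.le
    have h1 := (abs_lt.mp hmlt).1
    have h2 := (abs_lt.mp hMlt).2
    dsimp [b]; linarith
  have hsub : Set.Icc (-b) b ⊆ Set.Ioo (-a) a := fun x hx =>
    ⟨by cases hx; linarith, by cases hx; linarith⟩
  -- clamped versions
  set cl : ℝ → ℝ := fun x => max (-b) (min x b) with hcl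
  have hclc : Continuous cl := by fun_prop
  have hclmem : ∀ x, cl x ∈ Set.Icc (-b) b := fun x =>
    ⟨le_max_left _ _, max_le (by linarith) (min_le_right _ _)⟩
  have hclid : ∀ x ∈ Set.Icc (-b) b, cl x = x := fun x hx => by
    simp only [cl, min_eq_left hx.2, max_eq_right hx.1]
  set Ψ : ℝ → ℝ := fun x => ψ (cl x) with hΨ
  have hΨc : Continuous Ψ :=
    hψc.comp_continuous hclc (fun x => hsub (hclmem x))
  set pr : ℝ → ℝ := fun t => max 0 (min t T) with hpr
  have hprc : Continuous pr := by fun_prop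
  have hprmem : ∀ t, pr t ∈ Set.Icc (0:ℝ) T := fun t =>
    ⟨le_max_left _ _, max_le hT.le (min_le_right _ _)⟩
  have hprid : ∀ t ∈ Set.Icc (0:ℝ) T, pr t = t := fun t ht => by
    simp only [pr, min_eq_left ht.2, max_eq_right ht.1]
  set h' : ℝ → ℝ := fun t => h (pr t) with hh'
  have hh'c : Continuous h' := hh.comp_continuous hprc hprmem
  have hh'mem : ∀ t, m ≤ h' t ∧ h' t ≤ M := fun t => hle _ (hprmem t)
  set G : ℝ → ℝ := fun s => ∫ t in (0:ℝ)..T, Ψ (h' t - s) with hG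
  have hGc : Continuous G := by
    exact intervalIntegral.continuous_parametric_intervalIntegral_of_continuous'
      (f := fun s t => Ψ (h' t - s)) (hΨc.comp (by fun_prop)) 0 T
  -- for s in [m, M], G s equals the target integral
  have hGeq : ∀ s ∈ Set.Icc m M, G s = ∫ t in (0:ℝ)..T, ψ (h t - s) := by
    intro s hs
    apply intervalIntegral.integral_congr
    intro t ht
    rw [Set.uIcc_of_le hT.le] at ht
    have h1 := (hle t ht).1
    have h2 := (hle t ht).2
    have harg : h t - s ∈ Set.Icc (-b) b := ⟨by cases hs; dsimp [b]; linarith,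
      by cases hs; dsimp [b]; linarith⟩
    simp only [h', hprid t ht, Ψ, hclid _ harg]
  have hargIoo : ∀ s ∈ Set.Icc m M, ∀ t ∈ Set.Icc (0:ℝ) T,
      h t - s ∈ Set.Ioo (-a) a := by
    intro s hs t ht
    refine hsub ⟨?_, ?_⟩
    · have := (hle t ht).1; cases hs; dsimp [b]; linarith
    · have := (hle t ht).2; cases hs; dsimp [b]; linarith
  have h0Ioo : (0:ℝ) ∈ Set.Ioo (-a) a := ⟨by linarith, ha⟩
  -- sign of ψ
  have hsign_nonneg : ∀ x ∈ Set.Ioo (-a) a, 0 ≤ x → 0 ≤ ψ x := by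
    intro x hx hx0
    rcases eq_or_lt_of_le hx0 with h | h
    · simp [← h, hψ0]
    · have := hmono h0Ioo hx h; linarith [hψ0]
  have hsign_nonpos : ∀ x ∈ Set.Ioo (-a) a, x ≤ 0 → ψ x ≤ 0 := by
    intro x hx hx0
    rcases eq_or_lt_of_le hx0 with h | h
    · simp [h, hψ0]
    · have := hmono hx h0Ioo h; linarith [hψ0]
  have hGm : 0 ≤ G m := by
    rw [hGeq m ⟨le_refl m, hmM⟩]
    apply intervalIntegral.integral_nonneg hT.le
    intro t ht
    exact hsign_nonneg _ (hargIoo m ⟨le_refl m, hmM⟩ t ht) (by linarith [(hle t ht).1])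
  have hGM : G M ≤ 0 := by
    rw [hGeq M ⟨hmM, le_refl M⟩, ← neg_nonneg, ← intervalIntegral.integral_neg]
    apply intervalIntegral.integral_nonneg hT.le
    intro t ht
    have := hsign_nonpos _ (hargIoo M ⟨hmM, le_refl M⟩ t ht) (by linarith [(hle t ht).2])
    linarith
  obtain ⟨s, hsmem, hszero⟩ := intermediate_value_Icc' hmM hGc.continuousOn
    (Set.mem_Icc.mpr ⟨hGM, hGm⟩)
  -- integrability and uniqueness tools
  have hint : ∀ s ∈ Set.Icc m M, IntervalIntegrable (fun t => ψ (h t - s))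
      MeasureTheory.volume 0 T := by
    intro s hs
    apply ContinuousOn.intervalIntegrable
    rw [Set.uIcc_of_le hT.le]
    exact hψc.comp ((hh.sub continuousOn_const)) (fun t ht => hargIoo s hs t ht)
  have huniq : ∀ s1 ∈ Set.Icc m M, ∀ s2 ∈ Set.Icc m M,
      (∫ t in (0:ℝ)..T, ψ (h t - s1)) = 0 → (∫ t in (0:ℝ)..T, ψ (h t - s2)) = 0 →
      ¬ s1 < s2 := by
    intro s1 hs1 s2 hs2 hz1 hz2 hlt
    have hpos : 0 < ∫ t in (0:ℝ)..T, (ψ (h t - s1) - ψ (h t - s2)) := by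
      apply intervalIntegral.intervalIntegral_pos_of_pos_on
        ((hint s1 hs1).sub (hint s2 hs2))
      · intro t ht
        have ht' : t ∈ Set.Icc (0:ℝ) T := ⟨ht.1.le, ht.2.le⟩
        have := hmono (hargIoo s2 hs2 t ht') (hargIoo s1 hs1 t ht') (by linarith)
        linarith
      · exact hT
    rw [intervalIntegral.integral_sub (hint s1 hs1) (hint s2 hs2), hz1, hz2] at hpos
    linarith
  refine ⟨s, ⟨hsmem, by rw [← hGeq s hsmem]; exact hszero⟩, ?_⟩
  rintro s' ⟨hs'mem, hs'zero⟩
  have hszero' : (∫ t in (0:ℝ)..T, ψ (h t - s)) = 0 := by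
    rw [← hGeq s hsmem]; exact hszero
  rcases lt_trichotomy s' s with hlt | heq | hlt
  · exact absurd hlt (huniq s' hs'mem s hsmem hs'zero hszero')
  · exact heq
  · exact absurd hlt (huniq s hsmem s' hs'mem hszero' hs'zero)

theorem stmt0 (a T : ℝ) (ha : 0 < a) (hT : 0 < T)
    (φ ψ : ℝ → ℝ) (hφc : Continuous φ) (hφmem : ∀ y, φ y ∈ Set.Ioo (-a) a)
    (hφ0 : φ 0 = 0)
    (hψc : ContinuousOn ψ (Set.Ioo (-a) a))
    (hψφ : ∀ y, ψ (φ y) = y) (hφψ : ∀ x ∈ Set.Ioo (-a) a, φ (ψ x) = x)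
    (h : ℝ → ℝ) (hh : ContinuousOn h (Set.Icc 0 T))
    (hbound : ∀ t ∈ Set.Icc (0:ℝ) T, |h t| < a / 2) :
    ∃! s : ℝ, s ∈ Set.Icc (sInf (h '' Set.Icc 0 T)) (sSup (h '' Set.Icc 0 T)) ∧
      (∫ t in (0:ℝ)..T, ψ (h t - s)) = 0 := by
  have hφinj : Function.Injective φ := Function.LeftInverse.injective hψφ
  have hψ0 : ψ 0 = 0 := by have := hψφ 0; rwa [hφ0] at this
  rcases hφc.strictMono_of_inj hφinj with hmono | hanti
  · apply key a T ha hT ψ hψc hψ0 ?_ h hh hbound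
    intro x hx y hy hxy
    by_contra hle
    push_neg at hle
    have : y ≤ x := by
      have := hmono.le_iff_le (a := ψ y) (b := ψ x)
      rw [hφψ y hy, hφψ x hx] at this
      exact this.mpr hle
    linarith
  · have hmono' : StrictMonoOn (fun x => -ψ x) (Set.Ioo (-a) a) := by
      intro x hx y hy hxy
      simp only [neg_lt_neg_iff]
      by_contra hle
      push_neg at hle
      have : y ≤ x := by
        have := hanti.le_iff_ge (a := ψ y) (b := ψ x)
        rw [hφψ y hy, hφψ x hx] at this
        exact this.mpr hle
      linarith
    obtain ⟨s, ⟨hs1, hs2⟩, hu⟩ := key a T ha hT (fun x => -ψ x) hψc.neg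
      (by simp [hψ0]) hmono' h hh hbound
    rw [intervalIntegral.integral_neg, neg_eq_zero] at hs2
    refine ⟨s, ⟨hs1, hs2⟩, ?_⟩
    rintro s' ⟨hs'1, hs'2⟩
    exact hu s' ⟨hs'1, by rw [intervalIntegral.integral_neg, hs'2, neg_zero]⟩
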